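/- Let G be a connected simple graph with n vertices and m edges. Then PI_v(G) ≤ n·m − 3·t(G). -/

import Mathlib

/-!
Distance-based topological indices (PI, vertex PI, Szeged, edge Szeged, Zagreb indices,
triangle counts) for finite simple graphs, following Ilić, "Note on PI and Szeged indices".
-/

open scoped Classical
open Finset

namespace PaperDefs

variable {V : Type*} [Fintype V]

/-- `nCloser G u v` is `n_u(e)` for the edge `e = uv`: the number of vertices of `G`
whose distance to `u` is strictly smaller than their distance to `v`. -/
noncomputable def nCloser (G : SimpleGraph V) (u v : V) : ℕ :=
  (Finset.univ.filter fun w => G.dist w u < G.dist w v).card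

/-- The distance `d'(w, e) = min (d w u, d w v)` between a vertex `w` and an edge `e = uv`. -/
noncomputable def vertexEdgeDist (G : SimpleGraph V) (w : V) (e : Sym2 V) : ℕ :=
  Sym2.lift ⟨fun x y => min (G.dist w x) (G.dist w y), fun _ _ => min_comm _ _⟩ e

/-- `mCloser G u v` is `m_u(e)` for the edge `e = uv`: the number of edges of `G`
whose distance to `u` is strictly smaller than their distance to `v`. -/
noncomputable def mCloser (G : SimpleGraph V) (u v : V) : ℕ :=
  (G.edgeFinset.filter fun f => vertexEdgeDist G u f < vertexEdgeDist G v f).card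

/-- The vertex PI index `PI_v(G) = Σ_{e = uv ∈ E} (n_u(e) + n_v(e))`. -/
noncomputable def PIv (G : SimpleGraph V) : ℕ :=
  ∑ e ∈ G.edgeFinset,
    Sym2.lift ⟨fun u v => nCloser G u v + nCloser G v u, fun _ _ => add_comm _ _⟩ e

/-- The Szeged index `Sz(G) = Σ_{e = uv ∈ E} n_u(e) · n_v(e)`. -/
noncomputable def Sz (G : SimpleGraph V) : ℕ :=
  ∑ e ∈ G.edgeFinset,
    Sym2.lift ⟨fun u v => nCloser G u v * nCloser G v u, fun _ _ => mul_comm _ _⟩ e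

/-- The PI index `PI(G) = Σ_{e = uv ∈ E} (m_u(e) + m_v(e))`. -/
noncomputable def PI (G : SimpleGraph V) : ℕ :=
  ∑ e ∈ G.edgeFinset,
    Sym2.lift ⟨fun u v => mCloser G u v + mCloser G v u, fun _ _ => add_comm _ _⟩ e

/-- The edge Szeged index `Sz_e(G) = Σ_{e = uv ∈ E} m_u(e) · m_v(e)`. -/
noncomputable def Sze (G : SimpleGraph V) : ℕ :=
  ∑ e ∈ G.edgeFinset,
    Sym2.lift ⟨fun u v => mCloser G u v * mCloser G v u, fun _ _ => mul_comm _ _⟩ e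

/-- The first Zagreb index `M₁(G) = Σ_{v ∈ V} deg(v)²`. -/
noncomputable def M1 (G : SimpleGraph V) : ℕ :=
  ∑ v : V, G.degree v ^ 2

/-- The second Zagreb index `M₂(G) = Σ_{uv ∈ E} deg(u) · deg(v)`. -/
noncomputable def M2 (G : SimpleGraph V) : ℕ :=
  ∑ e ∈ G.edgeFinset,
    Sym2.lift ⟨fun u v => G.degree u * G.degree v, fun _ _ => mul_comm _ _⟩ e

/-- `triCount G` is `t(G)`, the number of triangles (subgraphs isomorphic to `K₃`) in `G`. -/
noncomputable def triCount (G : SimpleGraph V) : ℕ :=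
  (G.cliqueFinset 3).card

/-- `triEdge G u v` is `t(e)`, the number of triangles containing the edge `e = uv`,
i.e. the number of common neighbors of `u` and `v`. -/
noncomputable def triEdge (G : SimpleGraph V) (u v : V) : ℕ :=
  (Finset.univ.filter fun w => G.Adj u w ∧ G.Adj v w).card

end PaperDefs

open PaperDefs

section Aux

set_option linter.unusedSectionVars false

variable {V : Type*} [Fintype V]

lemma triEdge_comm (G : SimpleGraph V) (u v : V) : triEdge G u v = triEdge G v u := by
  unfold triEdge; congr 1; ext w; simp [and_comm]

noncomputable def eFin (e : Sym2 V) : Finset V :=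
  Sym2.lift ⟨fun a b => {a, b}, fun a b => Finset.pair_comm a b⟩ e

lemma eFin_mk (a b : V) : eFin (s(a, b)) = {a, b} := rfl

lemma mem_eFin {x : V} {e : Sym2 V} : x ∈ eFin e ↔ x ∈ e := by
  induction e using Sym2.inductionOn with | hf a b => ?_
  rw [eFin_mk]; simp [Sym2.mem_iff]

lemma eFin_inj {e e' : Sym2 V} (h : eFin e = eFin e') : e = e' := by
  induction e using Sym2.inductionOn with | hf a b => ?_
  induction e' using Sym2.inductionOn with | hf c d => ?_
  rw [eFin_mk, eFin_mk] at h
  have h1 := Finset.ext_iff.mp h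
  simp only [Finset.mem_insert, Finset.mem_singleton] at h1
  rw [Sym2.eq_iff]
  have ha := (h1 a).mp (Or.inl rfl)
  have hb := (h1 b).mp (Or.inr rfl)
  have hc := (h1 c).mpr (Or.inl rfl)
  have hd := (h1 d).mpr (Or.inr rfl)
  tauto

lemma per_edge (G : SimpleGraph V) {u v : V} (h : G.Adj u v) :
    nCloser G u v + nCloser G v u + triEdge G u v ≤ Fintype.card V := by
  classical
  set A := Finset.univ.filter fun w => G.dist w u < G.dist w v with hA
  set B := Finset.univ.filter fun w => G.dist w v < G.dist w u with hB
  set C := Finset.univ.filter fun w => G.Adj u w ∧ G.Adj v w with hC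
  have hdist : ∀ w ∈ C, G.dist w u = 1 ∧ G.dist w v = 1 := by
    intro w hw
    simp only [hC, Finset.mem_filter] at hw
    exact ⟨SimpleGraph.dist_eq_one_iff_adj.mpr hw.2.1.symm,
      SimpleGraph.dist_eq_one_iff_adj.mpr hw.2.2.symm⟩
  have dAB : Disjoint A B := by
    rw [Finset.disjoint_left]; intro w hw hw'
    simp only [hA, hB, Finset.mem_filter] at hw hw'; omega
  have dABC : Disjoint (A ∪ B) C := by
    rw [Finset.disjoint_left]; intro w hw hw'
    obtain ⟨h1, h2⟩ := hdist w hw'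
    simp only [hA, hB, Finset.mem_union, Finset.mem_filter] at hw
    omega
  calc nCloser G u v + nCloser G v u + triEdge G u v
      = (A ∪ B ∪ C).card := by
        rw [Finset.card_union_of_disjoint dABC, Finset.card_union_of_disjoint dAB]; rfl
    _ ≤ (Finset.univ : Finset V).card := Finset.card_le_card (Finset.subset_univ _)
    _ = Fintype.card V := Finset.card_univ

lemma sum_triEdge (G : SimpleGraph V) :
    ∑ e ∈ G.edgeFinset,
      Sym2.lift ⟨fun u v => triEdge G u v, fun u v => triEdge_comm G u v⟩ e
      = 3 * triCount G := by
  classical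
  set S : Finset (Sym2 V × V) :=
    (G.edgeFinset ×ˢ (Finset.univ : Finset V)).filter fun p => ∀ x ∈ p.1, G.Adj x p.2 with hS
  have step1 : S.card = ∑ e ∈ G.edgeFinset,
      Sym2.lift ⟨fun u v => triEdge G u v, fun u v => triEdge_comm G u v⟩ e := by
    rw [hS, Finset.card_filter, Finset.sum_product]
    refine Finset.sum_congr rfl fun e he => ?_
    induction e using Sym2.inductionOn with | hf u v => ?_
    rw [Sym2.lift_mk]
    simp only [triEdge, Finset.card_filter]
    refine Finset.sum_congr rfl fun w _ => ?_
    congr 1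
    simp [Sym2.mem_iff, or_imp, forall_and, forall_eq]
  have hmem : ∀ p ∈ S, insert p.2 (eFin p.1) ∈ G.cliqueFinset 3 := by
    rintro ⟨e, w⟩ hp
    simp only [hS, Finset.mem_filter, Finset.mem_product] at hp
    obtain ⟨⟨he, -⟩, hadj⟩ := hp
    induction e using Sym2.inductionOn with | hf u v => ?_
    have huv : G.Adj u v := (SimpleGraph.mem_edgeFinset.mp he)
    have hu : G.Adj u w := hadj u (by simp)
    have hv : G.Adj v w := hadj v (by simp)
    rw [eFin_mk, SimpleGraph.mem_cliqueFinset_iff]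
    exact SimpleGraph.is3Clique_triple_iff.mpr ⟨hu.symm, hv.symm, huv⟩
  have step2 := Finset.card_eq_sum_card_fiberwise hmem
  have fiber3 : ∀ T ∈ G.cliqueFinset 3,
      (S.filter fun p => insert p.2 (eFin p.1) = T).card = 3 := by
    intro T hT
    rw [SimpleGraph.mem_cliqueFinset_iff] at hT
    rw [← hT.2]
    apply Finset.card_bij (fun p _ => p.2)
    · rintro ⟨e, w⟩ hp
      simp only [Finset.mem_filter] at hp
      rw [← hp.2]; exact Finset.mem_insert_self _ _
    · rintro ⟨e, w⟩ hp ⟨e', w'⟩ hq hww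
      simp only [Finset.mem_filter, hS, Finset.mem_product] at hp hq
      dsimp at hww
      subst hww
      have hnot : w ∉ eFin e := fun hin =>
        G.loopless.irrefl w (hp.1.2 w (mem_eFin.mp hin))
      have hnot' : w ∉ eFin e' := fun hin =>
        G.loopless.irrefl w (hq.1.2 w (mem_eFin.mp hin))
      have he : eFin e = T.erase w := by
        rw [← hp.2, Finset.erase_insert hnot]
      have he' : eFin e' = T.erase w := by
        rw [← hq.2, Finset.erase_insert hnot']
      have := eFin_inj (he.trans he'.symm)
      simp [this]
    · intro w hw
      have hcard : (T.erase w).card = 2 := by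
        rw [Finset.card_erase_of_mem hw, hT.2]
      obtain ⟨x, y, hxy, hxyT⟩ := Finset.card_eq_two.mp hcard
      have hxT : x ∈ T.erase w := by rw [hxyT]; simp
      have hyT : y ∈ T.erase w := by rw [hxyT]; simp
      have hxw : x ≠ w := (Finset.mem_erase.mp hxT).1
      have hyw : y ≠ w := (Finset.mem_erase.mp hyT).1
      have hxT' : x ∈ T := Finset.mem_of_mem_erase hxT
      have hyT' : y ∈ T := Finset.mem_of_mem_erase hyT
      have hadjxy : G.Adj x y := hT.1 hxT' hyT' hxy
      have hadjxw : G.Adj x w := hT.1 hxT' hw hxw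
      have hadjyw : G.Adj y w := hT.1 hyT' hw hyw
      refine ⟨(s(x, y), w), ?_, rfl⟩
      simp only [Finset.mem_filter, hS, Finset.mem_product]
      refine ⟨⟨⟨SimpleGraph.mem_edgeFinset.mpr hadjxy, Finset.mem_univ _⟩, ?_⟩, ?_⟩
      · intro z hz
        rcases Sym2.mem_iff.mp hz with rfl | rfl
        · exact hadjxw
        · exact hadjyw
      · rw [eFin_mk, ← hxyT, Finset.insert_erase hw]
  rw [← step1, step2, Finset.sum_congr rfl fiber3, Finset.sum_const, smul_eq_mul,
    mul_comm, triCount]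

end Aux


/-- For a connected graph `G` with `n` vertices and `m` edges,
`PI_v(G) ≤ n m - 3 t(G)`. -/
theorem stmt_12 {V : Type*} [Fintype V] (G : SimpleGraph V) (hG : G.Connected) :
    (PIv G : ℤ) ≤ Fintype.card V * G.edgeFinset.card - 3 * triCount G := by
  classical
  have key : PIv G + ∑ e ∈ G.edgeFinset,
      Sym2.lift ⟨fun u v => triEdge G u v, fun u v => triEdge_comm G u v⟩ e
      ≤ Fintype.card V * G.edgeFinset.card := by
    rw [PIv, ← Finset.sum_add_distrib]
    calc (∑ e ∈ G.edgeFinset,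
          (Sym2.lift ⟨fun u v => nCloser G u v + nCloser G v u, fun _ _ => add_comm _ _⟩ e
            + Sym2.lift ⟨fun u v => triEdge G u v, fun u v => triEdge_comm G u v⟩ e))
        ≤ ∑ _e ∈ G.edgeFinset, Fintype.card V := by
          refine Finset.sum_le_sum fun e he => ?_
          induction e using Sym2.inductionOn with | hf u v => ?_
          rw [Sym2.lift_mk, Sym2.lift_mk]
          exact per_edge G (SimpleGraph.mem_edgeFinset.mp he)
      _ = Fintype.card V * G.edgeFinset.card := by
          rw [Finset.sum_const, smul_eq_mul, mul_comm]
  rw [sum_triEdge] at key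
  have := key
  zify at this
  linarith
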